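/- Let (X_n) be a nonnegative supermartingale adapted to a filtration (𝓕_n) on a probability space. Then for every a > 0 and every n: ℙ(∃ m ≥ n, X_m ≥ a) ≤ 𝔼[X_n]/a (Ville's inequality). -/

import Mathlib

open MeasureTheory Filter

theorem stmt_14 {Ω : Type*} {m0 : MeasurableSpace Ω} {μ : Measure Ω} [IsProbabilityMeasure μ]
    (ℱ : Filtration ℕ m0) (f : ℕ → Ω → ℝ)
    (hf : Supermartingale f ℱ μ) (hnonneg : ∀ n, 0 ≤ f n) :
    ∀ a : ℝ, 0 < a → ∀ n : ℕ,
      μ {ω | ∃ m, n ≤ m ∧ a ≤ f m ω} ≤ ENNReal.ofReal ((∫ ω, f n ω ∂μ) / a) := by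
  intro a ha n
  set A : ℕ → Set Ω := fun N => {ω | ∃ m, n ≤ m ∧ m ≤ N ∧ a ≤ f m ω} with hA
  have hmeas : ∀ m, MeasurableSet {ω | a ≤ f m ω} := fun m =>
    measurableSet_le measurable_const ((hf.stronglyMeasurable m).measurable.mono (ℱ.le m) le_rfl)
  have hAmeas : ∀ N, MeasurableSet (A N) := by
    intro N
    have : A N = ⋃ m ∈ Set.Icc n N, {ω | a ≤ f m ω} := by
      ext ω; simp [hA, Set.mem_Icc, and_assoc]
    rw [this]
    exact MeasurableSet.biUnion (Set.Icc n N).to_countable fun m _ => hmeas m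
  -- key finite-horizon inequality
  have key : ∀ N, n ≤ N → a * (μ (A N)).toReal ≤ ∫ ω, f n ω ∂μ := by
    intro N hN
    set τ : Ω → ℕ∞ := fun ω => (hittingBtwn f (Set.Ici a) n N ω : ℕ) with hτdef
    have hτ : IsStoppingTime ℱ τ := Adapted.isStoppingTime_hittingBtwn hf.stronglyAdapted.adapted measurableSet_Ici
    have hτ_le : ∀ ω, τ ω ≤ N := fun ω => by simpa [hτdef] using hittingBtwn_le ω
    have hint : Integrable (stoppedValue f τ) μ :=
      integrable_stoppedValue ℕ hτ hf.integrable hτ_le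
    have hmono : ∫ ω, stoppedValue f τ ω ∂μ ≤ ∫ ω, f n ω ∂μ := by
      have := (hf.neg).expected_stoppedValue_mono (isStoppingTime_const ℱ n) hτ
        (fun ω => WithTop.coe_le_coe.mpr (le_hittingBtwn (u := f) (s := Set.Ici a) hN ω)) hτ_le
      simp only [stoppedValue_const] at this
      have heq : stoppedValue (-f) τ = -(stoppedValue f τ) := rfl
      rw [heq] at this
      simp only [Pi.neg_apply, integral_neg] at this
      linarith
    have hbound : ∀ ω ∈ A N, a ≤ stoppedValue f τ ω := by
      intro ω hω
      obtain ⟨m, hm1, hm2, hm3⟩ := hω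
      exact stoppedValue_hittingBtwn_mem ⟨m, Set.mem_Icc.mpr ⟨hm1, hm2⟩, hm3⟩
    calc a * (μ (A N)).toReal ≤ ∫ ω in A N, stoppedValue f τ ω ∂μ :=
          by have := setIntegral_ge_of_const_le (hAmeas N) (measure_ne_top _ _) hbound hint.integrableOn
             simpa [Measure.real, smul_eq_mul, mul_comm] using this
      _ ≤ ∫ ω, stoppedValue f τ ω ∂μ :=
          setIntegral_le_integral hint (Eventually.of_forall fun ω => hnonneg _ _)
      _ ≤ _ := hmono
  -- measure bound for each N
  have hμA : ∀ N, μ (A N) ≤ ENNReal.ofReal ((∫ ω, f n ω ∂μ) / a) := by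
    intro N
    rcases le_total n N with hN | hN
    · have h := key N hN
      have : (μ (A N)).toReal ≤ (∫ ω, f n ω ∂μ) / a := by
        rw [le_div_iff₀ ha]; linarith [key N hN]
      calc μ (A N) = ENNReal.ofReal ((μ (A N)).toReal) := by
            rw [ENNReal.ofReal_toReal (measure_ne_top _ _)]
        _ ≤ _ := ENNReal.ofReal_le_ofReal this
    · calc μ (A N) ≤ μ (A n) := by
            apply measure_mono
            intro ω ⟨m, h1, h2, h3⟩
            exact ⟨m, h1, h2.trans hN, h3⟩
        _ ≤ _ := by
            have h := key n le_rfl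
            have : (μ (A n)).toReal ≤ (∫ ω, f n ω ∂μ) / a := by
              rw [le_div_iff₀ ha]; linarith
            calc μ (A n) = ENNReal.ofReal ((μ (A n)).toReal) := by
                  rw [ENNReal.ofReal_toReal (measure_ne_top _ _)]
              _ ≤ _ := ENNReal.ofReal_le_ofReal this
  -- pass to the limit
  have hUnion : {ω | ∃ m, n ≤ m ∧ a ≤ f m ω} = ⋃ N, A N := by
    ext ω
    constructor
    · rintro ⟨m, h1, h2⟩; exact Set.mem_iUnion.mpr ⟨m, m, h1, le_rfl, h2⟩
    · rintro h
      obtain ⟨N, m, h1, _, h3⟩ := Set.mem_iUnion.mp h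
      exact ⟨m, h1, h3⟩
  rw [hUnion]
  have hdir : Directed (· ⊆ ·) A := by
    intro N M
    refine ⟨max N M, ?_, ?_⟩ <;>
      · rintro ω ⟨m, h1, h2, h3⟩
        exact ⟨m, h1, h2.trans (by simp), h3⟩
  rw [hdir.measure_iUnion]
  exact iSup_le hμA
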